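/- Pointwise bound used in Hölder-type compatibility: for 1 < p ≤ 2 and all real u, v, one has (|u|^{p-1} sign(u) − |v|^{p-1} sign(v))(u − v) ≥ c_p |u − v|^p for some constant c_p > 0 depending only on p; in particular the inequality holds with c_p = 2^{p-2} when additionally u·v ≤ 0. -/
import Mathlib

private lemma rpow_subadd (a b q : ℝ) (ha : 0 ≤ a) (hb : 0 ≤ b) (hq : 0 ≤ q)
    (hq1 : q ≤ 1) : (a + b) ^ q ≤ a ^ q + b ^ q := by
  have h := NNReal.rpow_add_le_add_rpow a.toNNReal b.toNNReal hq hq1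
  have h2 := NNReal.coe_le_coe.2 h
  rw [NNReal.coe_add, NNReal.coe_rpow, NNReal.coe_rpow, NNReal.coe_rpow,
    ← Real.toNNReal_add ha hb, Real.coe_toNNReal _ (add_nonneg ha hb),
    Real.coe_toNNReal _ ha, Real.coe_toNNReal _ hb] at h2
  exact h2

private lemma aux_key (p a b : ℝ) (hp1 : 1 < p) (hp2 : p ≤ 2) (ha : 0 ≤ a) (hb : 0 ≤ b) :
    (a ^ (p - 1) + b ^ (p - 1)) * (a + b) ≥ (2 : ℝ) ^ (p - 2) * (a + b) ^ p := by
  rcases eq_or_lt_of_le (add_nonneg ha hb) with h0 | h0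
  · have ha0 : a = 0 := by nlinarith
    have hb0 : b = 0 := by nlinarith
    simp [ha0, hb0, Real.zero_rpow (by linarith : p ≠ 0)]
  · have hsum : (a + b) ^ p = (a + b) ^ (p - 1) * (a + b) := by
      rw [show p = (p - 1) + 1 by ring, Real.rpow_add_one (ne_of_gt h0), sub_add_cancel]
    have h1 : (a + b) ^ (p - 1) ≤ a ^ (p - 1) + b ^ (p - 1) :=
      rpow_subadd a b (p - 1) ha hb (by linarith) (by linarith)
    have h2 : (2 : ℝ) ^ (p - 2) ≤ 1 :=
      Real.rpow_le_one_of_one_le_of_nonpos (by norm_num) (by linarith)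
    have h3 : (0 : ℝ) ≤ (a + b) ^ p := Real.rpow_nonneg (le_of_lt h0) p
    calc (2 : ℝ) ^ (p - 2) * (a + b) ^ p ≤ 1 * (a + b) ^ p := by
          exact mul_le_mul_of_nonneg_right h2 h3
      _ = (a + b) ^ (p - 1) * (a + b) := by rw [one_mul, hsum]
      _ ≤ (a ^ (p - 1) + b ^ (p - 1)) * (a + b) :=
          mul_le_mul_of_nonneg_right h1 (le_of_lt h0)

private lemma main_case (p : ℝ) (hp1 : 1 < p) (hp2 : p ≤ 2)
    (u v : ℝ) (hu : 0 ≤ u) (hv : v ≤ 0) :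
    (|u| ^ (p - 1) * Real.sign u - |v| ^ (p - 1) * Real.sign v) * (u - v) ≥
      (2 : ℝ) ^ (p - 2) * |u - v| ^ p := by
  have hau : |u| = u := abs_of_nonneg hu
  have hav : |v| = -v := abs_of_nonpos hv
  have habs : |u - v| = u + -v := by rw [abs_of_nonneg (by linarith)]; ring
  have hsu : |u| ^ (p - 1) * Real.sign u = u ^ (p - 1) := by
    rcases eq_or_lt_of_le hu with h | h
    · simp [← h, Real.zero_rpow (by linarith : p - 1 ≠ 0)]
    · rw [hau, Real.sign_of_pos h, mul_one]
  have hsv : |v| ^ (p - 1) * Real.sign v = -((-v) ^ (p - 1)) := by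
    rcases eq_or_lt_of_le hv with h | h
    · simp [h, Real.zero_rpow (by linarith : p - 1 ≠ 0)]
    · rw [hav, Real.sign_of_neg h]; ring
  rw [hsu, hsv, habs, sub_neg_eq_add, show u - v = u + -v by ring]
  exact aux_key p u (-v) hp1 hp2 hu (by linarith)

theorem holder_compatibility_pointwise (p : ℝ) (hp1 : 1 < p) (hp2 : p ≤ 2)
    (u v : ℝ) (huv : u * v ≤ 0) :
    (|u| ^ (p - 1) * Real.sign u - |v| ^ (p - 1) * Real.sign v) * (u - v) ≥
      (2 : ℝ) ^ (p - 2) * |u - v| ^ p := by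
  rcases mul_nonpos_iff.mp huv with ⟨hu, hv⟩ | ⟨hu, hv⟩
  · have := main_case p hp1 hp2 u v hu hv
    exact this
  · have h := main_case p hp1 hp2 v u hv hu
    have e1 : |v - u| = |u - v| := abs_sub_comm v u
    calc (|u| ^ (p - 1) * Real.sign u - |v| ^ (p - 1) * Real.sign v) * (u - v)
        = (|v| ^ (p - 1) * Real.sign v - |u| ^ (p - 1) * Real.sign u) * (v - u) := by ring
      _ ≥ (2 : ℝ) ^ (p - 2) * |v - u| ^ p := h
      _ = (2 : ℝ) ^ (p - 2) * |u - v| ^ p := by rw [e1]
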